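/- arXiv:2305.06006 — 2 statements merged into one kernel-verified Lean document; each statement's English description precedes it below -/
import Mathlib

section
/- Let w > 0 and let ν ≥ 1 be a natural number; set θ = -(ν - 1/2)·w. For each natural number n define p_n = (1 + n·w)/(2 + n·w + |θ|). Then p_n ≥ 1/2 if and only if n ≥ ν, and p_n < 1/2 if and only if n < ν. -/
/-- Theorem 2 of the paper: with w > 0, ν ≥ 1 and θ = -(ν - 1/2)·w,
the steady-state probability p_n = (1 + n·w)/(2 + n·w + |θ|) of observing the
active decision molecule satisfies p_n ≥ 1/2 iff n ≥ ν, and p_n < 1/2 iff n < ν. -/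
theorem taylor_crn_map_property (w : ℝ) (hw : 0 < w) (ν : ℕ) (hν : 1 ≤ ν)
    (θ : ℝ) (hθ : θ = -((ν : ℝ) - 1/2) * w) (n : ℕ)
    (p : ℝ) (hp : p = (1 + (n : ℝ) * w) / (2 + (n : ℝ) * w + |θ|)) :
    (p ≥ 1/2 ↔ ν ≤ n) ∧ (p < 1/2 ↔ n < ν) := by
  have hν1 : (1 : ℝ) ≤ (ν : ℝ) := by exact_mod_cast hν
  have habs : |θ| = ((ν : ℝ) - 1/2) * w := by
    rw [hθ, neg_mul, abs_neg, abs_of_pos]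
    apply mul_pos _ hw; linarith
  have hnw : (0 : ℝ) ≤ (n : ℝ) * w := by positivity
  have hD : (0 : ℝ) < 2 + (n : ℝ) * w + |θ| := by
    rw [habs]; nlinarith
  have key : p ≥ 1/2 ↔ ν ≤ n := by
    rw [hp, ge_iff_le, le_div_iff₀ hD, habs]
    constructor
    · intro h
      have : ((ν : ℝ) - 1/2) * w ≤ (n : ℝ) * w := by linarith
      have := (mul_le_mul_iff_of_pos_right hw).mp this
      have : (ν : ℝ) ≤ (n : ℝ) + 1/2 := by linarith
      have : (ν : ℝ) < (n : ℝ) + 1 := by linarith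
      exact_mod_cast Nat.lt_add_one_iff.mp (by exact_mod_cast this)
    · intro h
      have : (ν : ℝ) ≤ (n : ℝ) := by exact_mod_cast h
      nlinarith
  refine ⟨key, ?_⟩
  rw [← not_le (a:=ν), ← key]; exact not_le.symm
end

section
/- Let k > 0, w > 0, θ ∈ ℝ with θ = -(ν - 1/2)·w for a natural number ν ≥ 1, and let n ∈ ℕ. Consider the two-state continuous-time Markov chain on {OFF, ON} with rate k·(1 + n·w) from OFF to ON and rate k·(1 + |θ|) from ON to OFF, with generator matrix Q_{OFF,OFF} = -k(1+n·w), Q_{OFF,ON} = k(1+n·w), Q_{ON,OFF} = k(1+|θ|), Q_{ON,ON} = -k(1+|θ|). Then the unique stationary distribution π (the probability vector with π·Q = 0) satisfies π_ON = (1 + n·w)/(2 + n·w + |θ|), and π_ON ≥ 1/2 if and only if n ≥ ν. -/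
open Matrix

/-- Theorem 2 of the paper together with its proof: the two-state
CTMC on {OFF, ON} (state 0 = OFF, state 1 = ON) with activation rate k·(1+n·w)
and deactivation rate k·(1+|θ|), where θ = -(ν - 1/2)·w, has a unique stationary
distribution π, and this stationary distribution satisfies
π_ON = (1 + n·w)/(2 + n·w + |θ|) and π_ON ≥ 1/2 iff n ≥ ν. -/
theorem taylor_crn_stationary_map (k w θ : ℝ) (hk : 0 < k) (hw : 0 < w)
    (ν : ℕ) (hν : 1 ≤ ν) (hθ : θ = -((ν : ℝ) - 1/2) * w) (n : ℕ)
    (Q : Matrix (Fin 2) (Fin 2) ℝ)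
    (hQ : Q = !![-(k * (1 + (n : ℝ) * w)), k * (1 + (n : ℝ) * w);
                 k * (1 + |θ|), -(k * (1 + |θ|))]) :
    (∃! π : Fin 2 → ℝ, (∀ s, 0 ≤ π s) ∧ π 0 + π 1 = 1 ∧ Matrix.vecMul π Q = 0) ∧
    (∀ π : Fin 2 → ℝ, (∀ s, 0 ≤ π s) → π 0 + π 1 = 1 → Matrix.vecMul π Q = 0 →
      π 1 = (1 + (n : ℝ) * w) / (2 + (n : ℝ) * w + |θ|) ∧
      (π 1 ≥ 1/2 ↔ ν ≤ n)) := by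
  have hνR : (1 : ℝ) ≤ (ν : ℝ) := by exact_mod_cast hν
  have habs : |θ| = ((ν : ℝ) - 1/2) * w := by
    rw [hθ, neg_mul, abs_neg, abs_of_nonneg (by nlinarith)]
  set A : ℝ := 1 + (n : ℝ) * w with hA
  set B : ℝ := 1 + |θ| with hB
  have hApos : 0 < A := by positivity
  have hBpos : 0 < B := by
    have := abs_nonneg θ; simp only [hB]; linarith
  have hABpos : 0 < A + B := by linarith
  have hsum : 2 + (n : ℝ) * w + |θ| = A + B := by simp [hA, hB]; ring
  -- characterization of the stationary condition
  have hchar : ∀ π : Fin 2 → ℝ, Matrix.vecMul π Q = 0 ↔ π 0 * A = π 1 * B := by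
    intro π
    subst hQ
    constructor
    · intro h
      have h0 := congrFun h 0
      simp [Matrix.vecMul, dotProduct, Fin.sum_univ_two] at h0
      nlinarith [h0]
    · intro h
      funext s
      fin_cases s <;>
        simp [Matrix.vecMul, dotProduct, Fin.sum_univ_two] <;> nlinarith
  -- any stationary distribution has π 1 = A/(A+B)
  have hsolve : ∀ π : Fin 2 → ℝ, π 0 + π 1 = 1 → Matrix.vecMul π Q = 0 →
      π 1 = A / (A + B) ∧ π 0 = B / (A + B) := by
    intro π hs hm
    rw [hchar] at hm
    have h1 : π 1 = A / (A + B) := by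
      field_simp
      nlinarith
    refine ⟨h1, ?_⟩
    have : π 0 = 1 - π 1 := by linarith
    rw [this, h1]
    field_simp
    ring
  constructor
  · refine ⟨![B / (A + B), A / (A + B)], ⟨?_, ?_, ?_⟩, ?_⟩
    · intro s; fin_cases s <;>
        · show (0:ℝ) ≤ _
          simp only [Matrix.cons_val_zero, Matrix.cons_val_one, Matrix.head_cons]
          first
          | exact div_nonneg hBpos.le hABpos.le
          | exact div_nonneg hApos.le hABpos.le
    · show B / (A + B) + A / (A + B) = 1
      field_simp; ring
    · rw [hchar]
      simp
      field_simp
    · intro π ⟨_, hs, hm⟩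
      obtain ⟨h1, h0⟩ := hsolve π hs hm
      funext s; fin_cases s <;> simp [h0, h1]
  · intro π hpos hs hm
    obtain ⟨h1, h0⟩ := hsolve π hs hm
    rw [hsum]
    refine ⟨h1, ?_⟩
    rw [h1]
    rw [ge_iff_le, le_div_iff₀ hABpos]
    constructor
    · intro h
      have hAB : B ≤ A := by linarith
      have : ((ν : ℝ) - 1/2) * w ≤ (n : ℝ) * w := by
        simp only [hA, hB, habs] at hAB; linarith
      have hnν : (ν : ℝ) - 1/2 ≤ (n : ℝ) := le_of_mul_le_mul_right (by linarith [this]) hw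
      by_contra hc
      push_neg at hc
      have : (n : ℝ) + 1 ≤ (ν : ℝ) := by exact_mod_cast hc
      linarith
    · intro h
      have : (ν : ℝ) ≤ (n : ℝ) := by exact_mod_cast h
      have hmul : ((ν : ℝ) - 1/2) * w ≤ (n : ℝ) * w :=
        mul_le_mul_of_nonneg_right (by linarith) hw.le
      have hAB : B ≤ A := by
        simp only [hA, hB, habs]; linarith
      linarith
end
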